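/- Fix β ∈ (0,1) and a probability space (Θ, μ). Define the CVaR envelope 𝒰_β = {ξ : Θ → ℝ measurable : ∫ ξ dμ = 1, 0 ≤ ξ(θ) ≤ 1/(1−β) μ-a.e.}. Let Z : Θ → ℝ be bounded measurable and suppose v ∈ ℝ satisfies μ{Z ≥ v} = 1 − β. Then ξ*(θ) = (1/(1−β))·1_{Z(θ) ≥ v} belongs to 𝒰_β and achieves the supremum: ∫ Z ξ* dμ = sup_{ξ ∈ 𝒰_β} ∫ Z ξ dμ. -/

import Mathlib

open MeasureTheory

/-- The CVaR risk envelope at level `β`: densities bounded by `1/(1−β)`. -/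
def cvarEnvelope {Θ : Type*} [MeasurableSpace Θ] (μ : Measure Θ) (β : ℝ) :
    Set (Θ → ℝ) :=
  {ξ | Measurable ξ ∧ (∫ θ, ξ θ ∂μ) = 1 ∧
    (∀ᵐ θ ∂μ, 0 ≤ ξ θ ∧ ξ θ ≤ 1 / (1 - β))}

/-- For `β ∈ (0,1)`, a bounded measurable `Z` and `v` with
`μ{Z ≥ v} = 1 − β`, the density `ξ* = (1/(1−β))·1_{Z ≥ v}` belongs to the CVaR
envelope and attains the supremum `sup_{ξ ∈ 𝒰_β} ∫ Z ξ dμ`. -/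
theorem cvar_optimal_density {Θ : Type*} [MeasurableSpace Θ]
    (μ : Measure Θ) [IsProbabilityMeasure μ]
    (β : ℝ) (hβ : β ∈ Set.Ioo (0 : ℝ) 1)
    (Z : Θ → ℝ) (hZm : Measurable Z) (M : ℝ) (hZb : ∀ θ, |Z θ| ≤ M)
    (v : ℝ) (hv : μ {θ | v ≤ Z θ} = ENNReal.ofReal (1 - β)) :
    (fun θ => if v ≤ Z θ then 1 / (1 - β) else 0) ∈ cvarEnvelope μ β ∧
    (∫ θ, Z θ * (if v ≤ Z θ then 1 / (1 - β) else 0) ∂μ)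
      = sSup ((fun ξ => ∫ θ, Z θ * ξ θ ∂μ) '' cvarEnvelope μ β) := by
  obtain ⟨hβ0, hβ1⟩ := hβ
  have h1β : (0:ℝ) < 1 - β := by linarith
  set c : ℝ := 1 / (1 - β) with hc
  have hcpos : 0 < c := by positivity
  set A : Set Θ := {θ | v ≤ Z θ} with hA
  have hAm : MeasurableSet A := measurableSet_le measurable_const hZm
  set ξs : Θ → ℝ := fun θ => if v ≤ Z θ then c else 0 with hξs
  have hξsm : Measurable ξs :=
    Measurable.ite hAm measurable_const measurable_const
  have hind : ξs = A.indicator (fun _ => c) := by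
    funext θ; simp [hξs, hA, Set.indicator_apply, Set.mem_setOf_eq]
  have hμA : (μ A).toReal = 1 - β := by rw [hA, hv]; exact ENNReal.toReal_ofReal h1β.le
  have hint1 : (∫ θ, ξs θ ∂μ) = 1 := by
    rw [hind, integral_indicator_const _ hAm, measureReal_def, hμA, smul_eq_mul, hc]
    field_simp
  have hmem : ξs ∈ cvarEnvelope μ β := by
    refine ⟨hξsm, hint1, ?_⟩
    filter_upwards with θ
    by_cases h : v ≤ Z θ
    · simp only [hξs, if_pos h]; exact ⟨hcpos.le, hc.le⟩
    · simp only [hξs, if_neg h]; exact ⟨le_refl 0, hc ▸ hcpos.le⟩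
  -- integrability helper
  have hbdd : ∀ (f : Θ → ℝ), Measurable f → ∀ C : ℝ, (∀ᵐ θ ∂μ, ‖f θ‖ ≤ C) →
      Integrable f μ :=
    fun f hf C h => (integrable_const C).mono' hf.aestronglyMeasurable h
  -- integrability and the key inequality for any ξ in the envelope
  have key : ∀ ξ ∈ cvarEnvelope μ β,
      (∫ θ, Z θ * ξ θ ∂μ) ≤ ∫ θ, Z θ * ξs θ ∂μ := by
    rintro ξ ⟨hξm, hξ1, hξb⟩
    have hξint : Integrable ξ μ := by
      refine hbdd ξ hξm c ?_
      filter_upwards [hξb] with θ ⟨h0, h1⟩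
      rw [Real.norm_eq_abs, abs_of_nonneg h0]; exact h1
    have hZξint : Integrable (fun θ => Z θ * ξ θ) μ := by
      refine hbdd _ (hZm.mul hξm) (|M| * c) ?_
      filter_upwards [hξb] with θ ⟨h0, h1⟩
      rw [Real.norm_eq_abs, abs_mul, abs_of_nonneg h0]
      exact mul_le_mul ((hZb θ).trans (le_abs_self M)) h1 h0 (abs_nonneg M)
    have hξsint : Integrable ξs μ := by
      refine hbdd ξs hξsm c ?_
      filter_upwards with θ
      by_cases h : v ≤ Z θ <;>
        simp [hξs, h, Real.norm_eq_abs, abs_of_nonneg hcpos.le, hcpos.le]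
    have hZξsint : Integrable (fun θ => Z θ * ξs θ) μ := by
      refine hbdd _ (hZm.mul hξsm) (|M| * c) ?_
      filter_upwards with θ
      rw [Real.norm_eq_abs, abs_mul]
      refine mul_le_mul ((hZb θ).trans (le_abs_self M)) ?_ (abs_nonneg _)
        (abs_nonneg M)
      by_cases h : v ≤ Z θ <;> simp [hξs, h, abs_of_nonneg hcpos.le, hcpos.le]
    have expand : ∀ (η : Θ → ℝ), Integrable (fun θ => Z θ * η θ) μ →
        Integrable η μ → (∫ θ, η θ ∂μ) = 1 →
        (∫ θ, (Z θ - v) * η θ ∂μ) = (∫ θ, Z θ * η θ ∂μ) - v := by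
      intro η h1 h2 h3
      have heq : (fun θ => (Z θ - v) * η θ) = fun θ => Z θ * η θ - v * η θ := by
        funext θ; ring
      rw [heq, integral_sub h1 (h2.const_mul v), integral_const_mul, h3, mul_one]
    have hmono : (∫ θ, (Z θ - v) * ξ θ ∂μ) ≤ ∫ θ, (Z θ - v) * ξs θ ∂μ := by
      refine integral_mono_ae ?_ ?_ ?_
      · have heq : (fun θ => (Z θ - v) * ξ θ) = fun θ => Z θ * ξ θ - v * ξ θ := by
          funext θ; ring
        rw [heq]; exact hZξint.sub (hξint.const_mul v)
      · have heq : (fun θ => (Z θ - v) * ξs θ) = fun θ => Z θ * ξs θ - v * ξs θ := by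
          funext θ; ring
        rw [heq]; exact hZξsint.sub (hξsint.const_mul v)
      · filter_upwards [hξb] with θ ⟨h0, h1⟩
        by_cases h : v ≤ Z θ
        · have : ξs θ = c := by simp [hξs, h]
          rw [this]
          exact mul_le_mul_of_nonneg_left h1 (sub_nonneg.2 h)
        · have : ξs θ = 0 := by simp [hξs, h]
          rw [this, mul_zero]
          push_neg at h
          exact mul_nonpos_of_nonpos_of_nonneg (by linarith) h0
    have e1 := expand ξ hZξint hξint hξ1
    have e2 := expand ξs hZξsint hξsint hint1
    linarith
  refine ⟨hmem, ?_⟩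
  have hne : (∫ θ, Z θ * ξs θ ∂μ) ∈ (fun ξ => ∫ θ, Z θ * ξ θ ∂μ) '' cvarEnvelope μ β :=
    ⟨ξs, hmem, rfl⟩
  have hub : ∀ y ∈ (fun ξ => ∫ θ, Z θ * ξ θ ∂μ) '' cvarEnvelope μ β,
      y ≤ ∫ θ, Z θ * ξs θ ∂μ := by
    rintro y ⟨ξ, hξ, rfl⟩
    exact key ξ hξ
  exact le_antisymm (le_csSup ⟨_, hub⟩ hne) (csSup_le ⟨_, hne⟩ hub)
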